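/- For the (ρ,ν)-TBRW urn: if the probability that color 0 is drawn only a finite number of times is strictly positive, then the probability that color 0 is never drawn is strictly positive. -/

import Mathlib

open MeasureTheory ProbabilityTheory Filter
open scoped ENNReal NNReal Topology

namespace TBRWPaper

/-- The mean `ν̄ = Σ_k k ν(k)` of the offspring distribution `ν`, in `ℝ≥0∞`. -/
noncomputable def nubar (ν : PMF ℕ) : ℝ≥0∞ := ∑' k : ℕ, (k : ℝ≥0∞) * ν k

variable {Ω : Type*} [MeasurableSpace Ω]

/-- Number of non-zero colors present in the urn after the addition phase of step `n`
(`ζ i` being the number of balls added at step `i`; colors are numbered consecutively,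
so the colors present at that moment are exactly `0, 1, …, urnColors ζ n ω`). -/
def urnColors (ζ : ℕ → Ω → ℕ) (n : ℕ) (ω : Ω) : ℕ := ∑ i ∈ Finset.Icc 1 n, ζ i ω

/-- σ-algebra of the urn history up to (and including) step `n`. -/
def urnPast (ζ B : ℕ → Ω → ℕ) (n : ℕ) : MeasurableSpace Ω :=
  (⨆ i ∈ Finset.Icc 1 n, MeasurableSpace.comap (ζ i) ⊤) ⊔
  ⨆ i ∈ Finset.Icc 1 n, MeasurableSpace.comap (B i) ⊤

/-- σ-algebra of the urn history just before the draw of step `n` (it includes the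
addition phase of step `n`). -/
def urnHist (ζ B : ℕ → Ω → ℕ) (n : ℕ) : MeasurableSpace Ω :=
  urnPast ζ B (n - 1) ⊔ MeasurableSpace.comap (ζ n) ⊤

/-- `IsUrn ρ ν P ζ B` asserts that, under the probability measure `P`, the pair of
processes `(ζ n, B n)_{n ≥ 1}` performs the `(ρ,ν)`-TBRW urn process: at each step
`n ≥ 1`, first `ζ n ∼ ν` new balls (with brand new colors, numbered consecutively) are
added to the urn independently of the past, then a ball is drawn from the urn with
probability proportional to its weight (color `0` having weight `ρ`, every other ball
weight `1`), its color `B n` is recorded, and it is returned to the urn. -/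
structure IsUrn (ρ : ℝ) (ν : PMF ℕ) (P : Measure Ω) (ζ B : ℕ → Ω → ℕ) : Prop where
  prob : IsProbabilityMeasure P
  measζ : ∀ n, Measurable (ζ n)
  measB : ∀ n, Measurable (B n)
  ζ_law : ∀ n, 1 ≤ n → P.map (ζ n) = ν.toMeasure
  ζ_indep : ∀ n, 1 ≤ n → Indep (MeasurableSpace.comap (ζ n) ⊤) (urnPast ζ B (n - 1)) P
  B_le : ∀ n ω, 1 ≤ n → B n ω ≤ urnColors ζ n ω
  draw_zero : ∀ n, 1 ≤ n → ∀ c : ℕ, ∀ H : Set Ω, MeasurableSet[urnHist ζ B n] H →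
      P (H ∩ {ω | urnColors ζ n ω = c} ∩ {ω | B n ω = 0}) =
        ENNReal.ofReal (ρ / (ρ + c)) * P (H ∩ {ω | urnColors ζ n ω = c})
  draw_pos : ∀ n, 1 ≤ n → ∀ c j : ℕ, 1 ≤ j → j ≤ c → ∀ H : Set Ω,
      MeasurableSet[urnHist ζ B n] H →
      P (H ∩ {ω | urnColors ζ n ω = c} ∩ {ω | B n ω = j}) =
        ENNReal.ofReal (1 / (ρ + c)) * P (H ∩ {ω | urnColors ζ n ω = c})

section Aux

variable {Ω : Type*} [MeasurableSpace Ω]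

/-- probability of a non-zero draw with `c` non-zero balls -/
noncomputable def qq (ρ : ℝ) (c : ℕ) : ℝ≥0∞ := ENNReal.ofReal (c / (ρ + c))

/-- partial sums of additions -/
def csum (a : ℕ → ℕ) (i : ℕ) : ℕ := ∑ j ∈ Finset.Icc 1 i, a j

/-- ζ-cylinder set -/
def Cyl (ζ : ℕ → Ω → ℕ) (M : ℕ) (a : ℕ → ℕ) : Set Ω := ⋂ i ∈ Finset.Icc 1 M, ζ i ⁻¹' {a i}

/-- no zero-draw on the index set `S` -/
def NZ (B : ℕ → Ω → ℕ) (S : Finset ℕ) : Set Ω := ⋂ i ∈ S, B i ⁻¹' ({0}ᶜ)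

variable {ρ : ℝ} {ν : PMF ℕ} {P : Measure Ω}

lemma rc_pos (hρ : 0 < ρ) (c : ℕ) : 0 < ρ + (c : ℝ) := by positivity

lemma qq_le_one (hρ : 0 < ρ) (c : ℕ) : qq ρ c ≤ 1 := by
  rw [qq, ← ENNReal.ofReal_one]
  apply ENNReal.ofReal_le_ofReal
  rw [div_le_one (rc_pos hρ c)]; linarith

lemma qq_mono (hρ : 0 < ρ) {c c' : ℕ} (hc : c ≤ c') : qq ρ c ≤ qq ρ c' := by
  apply ENNReal.ofReal_le_ofReal
  rw [div_le_div_iff₀ (rc_pos hρ c) (rc_pos hρ c')]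
  have : (c : ℝ) ≤ c' := by exact_mod_cast hc
  nlinarith

lemma base_le_qq (hρ : 0 < ρ) {c : ℕ} (hc : 1 ≤ c) :
    ENNReal.ofReal (1 / (ρ + 1)) ≤ qq ρ c := by
  apply ENNReal.ofReal_le_ofReal
  have hc' : (1 : ℝ) ≤ c := by exact_mod_cast hc
  rw [div_le_div_iff₀ (by linarith) (rc_pos hρ c)]
  nlinarith

omit [MeasurableSpace Ω] in
lemma measSet_comap {f : Ω → ℕ} (s : Set ℕ) :
    MeasurableSet[MeasurableSpace.comap f ⊤] (f ⁻¹' s) := ⟨s, trivial, rfl⟩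

variable {ζ B : ℕ → Ω → ℕ}

lemma comap_ζ_le_past {i n : ℕ} (h1 : 1 ≤ i) (h2 : i ≤ n) :
    MeasurableSpace.comap (ζ i) ⊤ ≤ urnPast ζ B n :=
  le_trans (le_iSup₂ (f := fun i (_ : i ∈ Finset.Icc 1 n) => MeasurableSpace.comap (ζ i) ⊤)
    i (Finset.mem_Icc.2 ⟨h1, h2⟩)) le_sup_left

lemma comap_B_le_past {i n : ℕ} (h1 : 1 ≤ i) (h2 : i ≤ n) :
    MeasurableSpace.comap (B i) ⊤ ≤ urnPast ζ B n :=
  le_trans (le_iSup₂ (f := fun i (_ : i ∈ Finset.Icc 1 n) => MeasurableSpace.comap (B i) ⊤)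
    i (Finset.mem_Icc.2 ⟨h1, h2⟩)) le_sup_right

lemma meas_Cyl_past {M n : ℕ} (hMn : M ≤ n) (a : ℕ → ℕ) :
    MeasurableSet[urnPast ζ B n] (Cyl ζ M a) := by
  apply Finset.measurableSet_biInter
  intro i hi
  rw [Finset.mem_Icc] at hi
  exact comap_ζ_le_past hi.1 (hi.2.trans hMn) _ (measSet_comap _)

lemma meas_NZ_past {n : ℕ} {S : Finset ℕ} (hS : S ⊆ Finset.Icc 1 n) :
    MeasurableSet[urnPast ζ B n] (NZ B S) := by
  apply Finset.measurableSet_biInter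
  intro i hi
  have := Finset.mem_Icc.1 (hS hi)
  exact comap_B_le_past this.1 this.2 _ (measSet_comap _)

lemma meas_Cyl (h : IsUrn ρ ν P ζ B) (M : ℕ) (a : ℕ → ℕ) : MeasurableSet (Cyl ζ M a) :=
  Finset.measurableSet_biInter _ fun i _ => (h.measζ i) (measurableSet_singleton _)

lemma meas_NZ (h : IsUrn ρ ν P ζ B) (S : Finset ℕ) : MeasurableSet (NZ B S) :=
  Finset.measurableSet_biInter _ fun i _ => (h.measB i) (measurableSet_singleton _).compl

lemma prob_ζ_eq (h : IsUrn ρ ν P ζ B) {n : ℕ} (hn : 1 ≤ n) (k : ℕ) :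
    P (ζ n ⁻¹' {k}) = ν k := by
  rw [← PMF.toMeasure_apply_singleton _ _ (measurableSet_singleton k), ← h.ζ_law n hn,
    Measure.map_apply (h.measζ n) (measurableSet_singleton k)]

lemma Cyl_succ (ζ : ℕ → Ω → ℕ) (M : ℕ) (a : ℕ → ℕ) :
    Cyl ζ (M+1) a = ζ (M+1) ⁻¹' {a (M+1)} ∩ Cyl ζ M a := by
  unfold Cyl
  rw [show Finset.Icc 1 (M+1) = insert (M+1) (Finset.Icc 1 M) by
    ext x; simp only [Finset.mem_Icc, Finset.mem_insert]; omega]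
  exact Finset.set_biInter_insert _ _ _

lemma urnColors_const {M : ℕ} {a : ℕ → ℕ} {ω : Ω} (hω : ω ∈ Cyl ζ M a) :
    urnColors ζ M ω = csum a M :=
  Finset.sum_congr rfl fun i hi => Set.mem_iInter₂.1 hω i hi

lemma meas_urnColors (h : IsUrn ρ ν P ζ B) (n : ℕ) : Measurable (urnColors ζ n) :=
  Finset.measurable_sum _ fun i _ => h.measζ i

lemma prod_formula (h : IsUrn ρ ν P ζ B) (hρ : 0 < ρ) :
    ∀ (M : ℕ) (a : ℕ → ℕ) (S : Finset ℕ), S ⊆ Finset.Icc 1 M →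
      P (Cyl ζ M a ∩ NZ B S) =
        (∏ i ∈ Finset.Icc 1 M, (ν (a i) : ℝ≥0∞)) * ∏ i ∈ S, qq ρ (csum a i) := by
  have hPP := h.prob
  intro M
  induction M with
  | zero =>
    intro a S hS
    have hI : Finset.Icc 1 0 = (∅ : Finset ℕ) := by decide
    have hS0 : S = ∅ := Finset.subset_empty.1 (hI ▸ hS)
    subst hS0
    simp [Cyl, NZ, hI]
  | succ M ih =>
    intro a S hS
    have hicc : Finset.Icc 1 (M+1) = insert (M+1) (Finset.Icc 1 M) := by
      ext x; simp only [Finset.mem_Icc, Finset.mem_insert]; omega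
    set S' := S.erase (M+1) with hS'def
    have hS' : S' ⊆ Finset.Icc 1 M := by
      intro i hi
      have h1 := Finset.mem_of_mem_erase hi
      have h2 := Finset.ne_of_mem_erase hi
      have h3 := Finset.mem_Icc.1 (hS h1)
      rw [Finset.mem_Icc]; omega
    set K : Set Ω := Cyl ζ M a ∩ NZ B S' with hK
    set H : Set Ω := ζ (M+1) ⁻¹' {a (M+1)} ∩ K with hHdef
    have hKmeas : MeasurableSet[urnPast ζ B M] K :=
      (meas_Cyl_past le_rfl a).inter (meas_NZ_past hS')
    have hPH : P H = (ν (a (M+1)) : ℝ≥0∞) * P K := by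
      have hind := h.ζ_indep (M+1) (by omega)
      simp only [Nat.add_sub_cancel] at hind
      have := (Indep_iff _ _ _).1 hind _ _ (measSet_comap {a (M+1)}) hKmeas
      rw [hHdef, this, prob_ζ_eq h (by omega)]
    have hHC : Cyl ζ (M+1) a ∩ NZ B S' = H := by
      rw [Cyl_succ, hHdef, hK, Set.inter_assoc]
    have hIH : P K = (∏ i ∈ Finset.Icc 1 M, (ν (a i) : ℝ≥0∞)) * ∏ i ∈ S', qq ρ (csum a i) :=
      ih a S' hS'
    by_cases hmem : (M+1) ∈ S
    · -- the top index is a draw index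
      have hSins : S = insert (M+1) S' := (Finset.insert_erase hmem).symm
      have hnotS' : (M+1) ∉ S' := Finset.notMem_erase _ _
      have hNZins : NZ B S = B (M+1) ⁻¹' ({0}ᶜ) ∩ NZ B S' := by
        rw [hSins]; exact Finset.set_biInter_insert _ _ _
      set c := csum a (M+1) with hc
      have hHmeas : MeasurableSet[urnHist ζ B (M+1)] H := by
        refine MeasurableSet.inter ?_ ?_
        · exact (le_sup_right : MeasurableSpace.comap (ζ (M+1)) ⊤ ≤ urnHist ζ B (M+1)) _
            (measSet_comap _)
        · exact (le_sup_left : urnPast ζ B M ≤ urnHist ζ B (M+1)) _ hKmeas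
      have hsub : H ⊆ {ω | urnColors ζ (M+1) ω = c} := by
        intro ω hω
        have hωc : ω ∈ Cyl ζ (M+1) a := by
          rw [← hHC] at hω; exact hω.1
        exact urnColors_const hωc
      have hHu : H ∩ {ω | urnColors ζ (M+1) ω = c} = H := Set.inter_eq_self_of_subset_left hsub
      have hdecomp : H ∩ B (M+1) ⁻¹' ({0}ᶜ)
          = ⋃ j ∈ Finset.Icc 1 c,
              (H ∩ {ω | urnColors ζ (M+1) ω = c} ∩ {ω | B (M+1) ω = j}) := by
        ext ω
        simp only [Set.mem_inter_iff, Set.mem_iUnion, Set.mem_preimage, Set.mem_compl_iff,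
          Set.mem_singleton_iff, Finset.mem_Icc, Set.mem_setOf_eq, exists_prop]
        constructor
        · rintro ⟨hωH, hB⟩
          have hcc : urnColors ζ (M+1) ω = c := hsub hωH
          have hble : B (M+1) ω ≤ c := hcc ▸ h.B_le (M+1) ω (by omega)
          exact ⟨B (M+1) ω, ⟨by omega, hble⟩, ⟨⟨hωH, hcc⟩, rfl⟩⟩
        · rintro ⟨j, ⟨hj1, hjc⟩, ⟨⟨hωH, _⟩, hBj⟩⟩
          exact ⟨hωH, by omega⟩
      have hHm0 : MeasurableSet H :=
        ((h.measζ (M+1)) (measurableSet_singleton _)).inter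
          ((meas_Cyl h M a).inter (meas_NZ h S'))
      have hPHB : P (H ∩ B (M+1) ⁻¹' ({0}ᶜ)) = qq ρ c * P H := by
        rw [hdecomp, measure_biUnion_finset]
        · have hterm : ∀ j ∈ Finset.Icc 1 c,
              P (H ∩ {ω | urnColors ζ (M+1) ω = c} ∩ {ω | B (M+1) ω = j})
                = ENNReal.ofReal (1/(ρ+c)) * P H := by
            intro j hj
            rw [Finset.mem_Icc] at hj
            rw [h.draw_pos (M+1) (by omega) c j hj.1 hj.2 H hHmeas, hHu]
          rw [Finset.sum_congr rfl hterm, Finset.sum_const, Nat.card_Icc]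
          simp only [Nat.add_sub_cancel]
          rw [nsmul_eq_mul, ← mul_assoc]
          congr 1
          rw [qq, show ((c : ℕ) : ℝ≥0∞) = ENNReal.ofReal (c : ℝ) from
            (ENNReal.ofReal_natCast c).symm, ← ENNReal.ofReal_mul (by positivity)]
          congr 1
          field_simp
        · intro j hj j' hj' hne
          refine Set.disjoint_left.2 fun ω hω hω' => ?_
          exact hne (hω.2.symm.trans hω'.2)
        · intro j hj
          exact (hHm0.inter ((meas_urnColors h (M+1)) (measurableSet_singleton c))).inter
            ((h.measB (M+1)) (measurableSet_singleton j))
      have hLHS : Cyl ζ (M+1) a ∩ NZ B S = H ∩ B (M+1) ⁻¹' ({0}ᶜ) := by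
        rw [hNZins, ← hHC]
        ext ω
        simp only [Set.mem_inter_iff]
        tauto
      rw [hLHS, hPHB, hPH, hIH, hicc, Finset.prod_insert (by simp), hSins,
        Finset.prod_insert hnotS']
      ring
    · -- the top index is not a draw index
      have hSS : S' = S := Finset.erase_eq_of_notMem hmem
      have hSsub : S ⊆ Finset.Icc 1 M := hSS ▸ hS'
      rw [← hSS, hHC, hPH, hIH, hicc, Finset.prod_insert (by simp)]
      ring

/-- encode a cylinder by a tuple -/
def extv (M : ℕ) (v : Fin M → ℕ) : ℕ → ℕ := fun i => if h : i - 1 < M then v ⟨i - 1, h⟩ else 0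

lemma tsum_cyl (h : IsUrn ρ ν P ζ B) (M : ℕ) {E : Set Ω} (hE : MeasurableSet E) :
    P E = ∑' v : Fin M → ℕ, P (E ∩ Cyl ζ M (extv M v)) := by
  have hcover : E = ⋃ v : Fin M → ℕ, (E ∩ Cyl ζ M (extv M v)) := by
    ext ω
    constructor
    · intro hω
      refine Set.mem_iUnion.2 ⟨fun j => ζ (j + 1) ω, hω, ?_⟩
      refine Set.mem_iInter₂.2 fun i hi => ?_
      rw [Finset.mem_Icc] at hi
      have hlt : i - 1 < M := by omega
      simp only [extv, Set.mem_preimage, Set.mem_singleton_iff, dif_pos hlt]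
      show ζ i ω = ζ (i - 1 + 1) ω
      congr 1
      omega
    · intro hω
      rcases Set.mem_iUnion.1 hω with ⟨v, hv⟩
      exact hv.1
  have hdisj : Pairwise (Function.onFun Disjoint fun v => E ∩ Cyl ζ M (extv M v)) := by
    intro v w hvw
    refine Set.disjoint_left.2 fun ω hv hw => hvw ?_
    funext j
    have hj : (j : ℕ) + 1 ∈ Finset.Icc 1 M := Finset.mem_Icc.2 ⟨by omega, by omega⟩
    have h1 : ζ (j + 1) ω = extv M v (j + 1) := Set.mem_iInter₂.1 hv.2 _ hj
    have h2 : ζ (j + 1) ω = extv M w (j + 1) := Set.mem_iInter₂.1 hw.2 _ hj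
    have hlt : (j : ℕ) + 1 - 1 < M := by omega
    rw [extv] at h1 h2
    simp only [dif_pos hlt] at h1 h2
    have : v ⟨(j : ℕ) + 1 - 1, hlt⟩ = w ⟨(j : ℕ) + 1 - 1, hlt⟩ := h1 ▸ h2
    simpa [Fin.ext_iff] using this
  conv_lhs => rw [hcover]
  exact measure_iUnion hdisj fun v => hE.inter (meas_Cyl h M _)

lemma NZ_anti {S T : Finset ℕ} (hST : S ⊆ T) : NZ B T ⊆ NZ B S := by
  intro ω hω
  exact Set.mem_iInter₂.2 fun i hi => Set.mem_iInter₂.1 hω i (hST hi)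

lemma csum_extv_one_le {M : ℕ} (hM : 1 ≤ M) {v : Fin M → ℕ}
    (hv : 1 ≤ v ⟨0, by omega⟩) {i : ℕ} (hi : 1 ≤ i) : 1 ≤ csum (extv M v) i := by
  have h1 : (1 : ℕ) ∈ Finset.Icc 1 i := Finset.mem_Icc.2 ⟨le_rfl, hi⟩
  have he : extv M v 1 = v ⟨0, by omega⟩ := by
    unfold extv
    rw [dif_pos (show (1 : ℕ) - 1 < M by omega)]
  calc 1 ≤ extv M v 1 := by rw [he]; exact hv
    _ ≤ csum (extv M v) i := Finset.single_le_sum (fun j _ => Nat.zero_le _) h1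

lemma step1 (h : IsUrn ρ ν P ζ B) (hρ : 0 < ρ) {N : ℕ} (hN : 1 ≤ N) (M : ℕ) (hM : 1 ≤ M) :
    (ENNReal.ofReal (1 / (ρ + 1))) ^ (N - 1) * P ({ω | 1 ≤ ζ 1 ω} ∩ NZ B (Finset.Icc N M))
      ≤ P (NZ B (Finset.Icc 1 M)) := by
  have hG : MeasurableSet {ω | 1 ≤ ζ 1 ω} := h.measζ 1 (by trivial : MeasurableSet {k | 1 ≤ k})
  set β : ℝ≥0∞ := (ENNReal.ofReal (1 / (ρ + 1))) ^ (N - 1) with hβ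
  rw [tsum_cyl h M (hG.inter (meas_NZ h _)), tsum_cyl h M (meas_NZ h (Finset.Icc 1 M)),
    ← ENNReal.tsum_mul_left]
  refine ENNReal.tsum_le_tsum fun v => ?_
  by_cases hv : 1 ≤ v ⟨0, by omega⟩
  · -- the first addition is non-trivial
    set a : ℕ → ℕ := extv M v with ha
    have hsub1 : Finset.Icc N M ⊆ Finset.Icc 1 M := by
      intro i hi; rw [Finset.mem_Icc] at *; omega
    have hf1 : P (Cyl ζ M a ∩ NZ B (Finset.Icc N M))
        = (∏ i ∈ Finset.Icc 1 M, (ν (a i) : ℝ≥0∞)) * ∏ i ∈ Finset.Icc N M, qq ρ (csum a i) :=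
      prod_formula h hρ M a _ hsub1
    have hf2 : P (Cyl ζ M a ∩ NZ B (Finset.Icc 1 M))
        = (∏ i ∈ Finset.Icc 1 M, (ν (a i) : ℝ≥0∞)) * ∏ i ∈ Finset.Icc 1 M, qq ρ (csum a i) :=
      prod_formula h hρ M a _ le_rfl
    set D : Finset ℕ := Finset.Icc 1 M \ Finset.Icc N M with hD
    have hQsplit : (∏ i ∈ D, qq ρ (csum a i)) * ∏ i ∈ Finset.Icc N M, qq ρ (csum a i)
        = ∏ i ∈ Finset.Icc 1 M, qq ρ (csum a i) := Finset.prod_sdiff hsub1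
    have hβD : β ≤ ∏ i ∈ D, qq ρ (csum a i) := by
      have hcard : D.card ≤ N - 1 := by
        have : D ⊆ Finset.Icc 1 (N - 1) := by
          intro i hi
          rw [hD, Finset.mem_sdiff, Finset.mem_Icc, Finset.mem_Icc] at hi
          rw [Finset.mem_Icc]; omega
        calc D.card ≤ (Finset.Icc 1 (N - 1)).card := Finset.card_le_card this
          _ = N - 1 := by rw [Nat.card_Icc]; omega
      calc β ≤ (ENNReal.ofReal (1 / (ρ + 1))) ^ D.card := by
            rw [hβ]
            exact pow_le_pow_of_le_one zero_le (by
              rw [← ENNReal.ofReal_one]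
              exact ENNReal.ofReal_le_ofReal (by rw [div_le_one (by linarith)]; linarith)) hcard
        _ = ∏ _i ∈ D, ENNReal.ofReal (1 / (ρ + 1)) := by rw [Finset.prod_const]
        _ ≤ ∏ i ∈ D, qq ρ (csum a i) := by
            refine Finset.prod_le_prod' fun i hi => ?_
            rw [hD, Finset.mem_sdiff, Finset.mem_Icc] at hi
            exact base_le_qq hρ (csum_extv_one_le hM hv hi.1.1)
    calc β * P ({ω | 1 ≤ ζ 1 ω} ∩ NZ B (Finset.Icc N M) ∩ Cyl ζ M a)
        ≤ β * P (Cyl ζ M a ∩ NZ B (Finset.Icc N M)) := by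
          have hmono : {ω | 1 ≤ ζ 1 ω} ∩ NZ B (Finset.Icc N M) ∩ Cyl ζ M a
              ⊆ Cyl ζ M a ∩ NZ B (Finset.Icc N M) := fun ω hω => ⟨hω.2, hω.1.2⟩
          exact mul_le_mul_right (measure_mono hmono) β
      _ = β * ((∏ i ∈ Finset.Icc 1 M, (ν (a i) : ℝ≥0∞))
            * ∏ i ∈ Finset.Icc N M, qq ρ (csum a i)) := by rw [hf1]
      _ ≤ (∏ i ∈ D, qq ρ (csum a i)) * ((∏ i ∈ Finset.Icc 1 M, (ν (a i) : ℝ≥0∞))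
            * ∏ i ∈ Finset.Icc N M, qq ρ (csum a i)) := by gcongr
      _ = (∏ i ∈ Finset.Icc 1 M, (ν (a i) : ℝ≥0∞)) * ((∏ i ∈ D, qq ρ (csum a i))
            * ∏ i ∈ Finset.Icc N M, qq ρ (csum a i)) := by ring
      _ = P (Cyl ζ M a ∩ NZ B (Finset.Icc 1 M)) := by rw [hQsplit, ← hf2]
      _ = P (NZ B (Finset.Icc 1 M) ∩ Cyl ζ M a) := by rw [Set.inter_comm]
  · -- the first addition is trivial: left side vanishes
    have hempty : {ω | 1 ≤ ζ 1 ω} ∩ NZ B (Finset.Icc N M) ∩ Cyl ζ M (extv M v) = ∅ := by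
      apply Set.eq_empty_iff_forall_notMem.2
      rintro ω ⟨⟨h1, -⟩, hcyl⟩
      have h1M : (1 : ℕ) ∈ Finset.Icc 1 M := Finset.mem_Icc.2 ⟨le_rfl, hM⟩
      have hζ1 : ζ 1 ω = extv M v 1 := Set.mem_iInter₂.1 hcyl 1 h1M
      have he : extv M v 1 = v ⟨0, by omega⟩ := by
        unfold extv
        rw [dif_pos (show (1 : ℕ) - 1 < M by omega)]
      have h1' : 1 ≤ ζ 1 ω := h1
      rw [hζ1, he] at h1'
      omega
    rw [hempty]
    simp

lemma step2 (h : IsUrn ρ ν P ζ B) (hρ : 0 < ρ) {N b : ℕ} (hN : 1 ≤ N) (hb : 1 ≤ b)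
    (hνb : (ν b : ℝ≥0∞) ≠ 0) (M : ℕ) (hM : 1 ≤ M) :
    P (ζ 1 ⁻¹' {0} ∩ NZ B (Finset.Icc N M))
      ≤ ((ν 0 : ℝ≥0∞) / ν b) * P (ζ 1 ⁻¹' {b} ∩ NZ B (Finset.Icc N M)) := by
  have hz : (0 : ℕ) < M := by omega
  set z : Fin M := ⟨0, hz⟩ with hzdef
  have hsubN : Finset.Icc N M ⊆ Finset.Icc 1 M := by
    intro i hi; rw [Finset.mem_Icc] at *; omega
  have h1M : (1 : ℕ) ∈ Finset.Icc 1 M := Finset.mem_Icc.2 ⟨le_rfl, hM⟩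
  have hext1 : ∀ v : Fin M → ℕ, extv M v 1 = v z := by
    intro v
    unfold extv
    rw [dif_pos (show (1 : ℕ) - 1 < M by omega)]
  have hcylζ : ∀ (v : Fin M → ℕ) (ω : Ω), ω ∈ Cyl ζ M (extv M v) → ζ 1 ω = v z := by
    intro v ω hω
    have := Set.mem_iInter₂.1 hω 1 h1M
    rw [Set.mem_preimage, Set.mem_singleton_iff] at this
    rw [this, hext1]
  set f : (Fin M → ℕ) → ℝ≥0∞ :=
    fun v => P (ζ 1 ⁻¹' {0} ∩ NZ B (Finset.Icc N M) ∩ Cyl ζ M (extv M v)) with hf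
  set g : (Fin M → ℕ) → ℝ≥0∞ :=
    fun v => P (ζ 1 ⁻¹' {b} ∩ NZ B (Finset.Icc N M) ∩ Cyl ζ M (extv M v)) with hg
  have hmeas0 : MeasurableSet (ζ 1 ⁻¹' ({0} : Set ℕ) ∩ NZ B (Finset.Icc N M)) :=
    (h.measζ 1 (measurableSet_singleton 0)).inter (meas_NZ h _)
  have hmeasb : MeasurableSet (ζ 1 ⁻¹' ({b} : Set ℕ) ∩ NZ B (Finset.Icc N M)) :=
    (h.measζ 1 (measurableSet_singleton b)).inter (meas_NZ h _)
  rw [tsum_cyl h M hmeas0, tsum_cyl h M hmeasb, ← ENNReal.tsum_mul_left]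
  have hsupp : Function.support f ⊆ {v | v z = 0} := by
    intro v hv
    by_contra hvz
    apply hv
    have hemp : ζ 1 ⁻¹' ({0} : Set ℕ) ∩ NZ B (Finset.Icc N M) ∩ Cyl ζ M (extv M v) = ∅ := by
      apply Set.eq_empty_iff_forall_notMem.2
      rintro ω ⟨⟨hω0, -⟩, hcyl⟩
      rw [Set.mem_preimage, Set.mem_singleton_iff] at hω0
      refine hvz ?_
      show v z = 0
      rw [← hcylζ v ω hcyl]
      exact hω0
    show P _ = 0
    rw [hemp]
    exact measure_empty
  rw [← tsum_subtype_eq_of_support_subset hsupp]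
  refine ENNReal.summable.tsum_le_tsum_of_inj (fun v : ({v | v z = 0} : Set (Fin M → ℕ)) => Function.update v.1 z b)
    (fun v w hvw => ?_) (fun c _ => zero_le) (fun v => ?_) ENNReal.summable
  · -- injectivity
    apply Subtype.ext
    funext j
    by_cases hj : j = z
    · have h2 : v.1 z = 0 := v.2
      have h3 : w.1 z = 0 := w.2
      rw [hj, h2, h3]
    · have := congrFun hvw j
      simp only at this
      rwa [Function.update_of_ne hj, Function.update_of_ne hj] at this
  · -- the termwise bound
    obtain ⟨v, hv0'⟩ := v
    have hv0 : v z = 0 := hv0'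
    set w : Fin M → ℕ := Function.update v z b with hw
    have hle : ∀ j, extv M v j ≤ extv M w j := by
      intro j
      unfold extv
      by_cases hj : j - 1 < M
      · rw [dif_pos hj, dif_pos hj]
        by_cases hjz : (⟨j - 1, hj⟩ : Fin M) = z
        · rw [hjz, hv0, hw, Function.update_self]
          exact Nat.zero_le b
        · rw [hw, Function.update_of_ne hjz]
      · rw [dif_neg hj, dif_neg hj]
    have hcv : Cyl ζ M (extv M v) ⊆ ζ 1 ⁻¹' {0} := by
      intro ω hω
      rw [Set.mem_preimage, Set.mem_singleton_iff, hcylζ v ω hω, hv0]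
    have hcw : Cyl ζ M (extv M w) ⊆ ζ 1 ⁻¹' {b} := by
      intro ω hω
      rw [Set.mem_preimage, Set.mem_singleton_iff, hcylζ w ω hω, hw, Function.update_self]
    have hsetv : ζ 1 ⁻¹' ({0} : Set ℕ) ∩ NZ B (Finset.Icc N M) ∩ Cyl ζ M (extv M v)
        = Cyl ζ M (extv M v) ∩ NZ B (Finset.Icc N M) := by
      ext ω
      constructor
      · rintro ⟨⟨-, hnz⟩, hcyl⟩; exact ⟨hcyl, hnz⟩
      · rintro ⟨hcyl, hnz⟩; exact ⟨⟨hcv hcyl, hnz⟩, hcyl⟩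
    have hsetw : ζ 1 ⁻¹' ({b} : Set ℕ) ∩ NZ B (Finset.Icc N M) ∩ Cyl ζ M (extv M w)
        = Cyl ζ M (extv M w) ∩ NZ B (Finset.Icc N M) := by
      ext ω
      constructor
      · rintro ⟨⟨-, hnz⟩, hcyl⟩; exact ⟨hcyl, hnz⟩
      · rintro ⟨hcyl, hnz⟩; exact ⟨⟨hcw hcyl, hnz⟩, hcyl⟩
    have hfv : f v = P (Cyl ζ M (extv M v) ∩ NZ B (Finset.Icc N M)) := by
      simp only [hf]
      rw [hsetv]
    rw [hfv, hsetw, prod_formula h hρ M _ _ hsubN, prod_formula h hρ M _ _ hsubN]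
    have hicc : Finset.Icc 1 M = insert 1 (Finset.Icc 2 M) := by
      ext x; simp only [Finset.mem_Icc, Finset.mem_insert]; omega
    have hnot1 : (1 : ℕ) ∉ Finset.Icc 2 M := by simp
    have hReq : ∏ i ∈ Finset.Icc 2 M, (ν (extv M v i) : ℝ≥0∞)
        = ∏ i ∈ Finset.Icc 2 M, (ν (extv M w i) : ℝ≥0∞) := by
      refine Finset.prod_congr rfl fun i hi => ?_
      rw [Finset.mem_Icc] at hi
      congr 1
      unfold extv
      by_cases hj : i - 1 < M
      · rw [dif_pos hj, dif_pos hj, hw, Function.update_of_ne]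
        intro hc
        have : i - 1 = (0 : ℕ) := congrArg Fin.val hc
        omega
      · rw [dif_neg hj, dif_neg hj]
    have hv1 : (ν (extv M v 1) : ℝ≥0∞) = ν 0 := by rw [hext1, hv0]
    have hw1 : (ν (extv M w 1) : ℝ≥0∞) = ν b := by rw [hext1, hw, Function.update_self]
    have hQ : ∏ i ∈ Finset.Icc N M, qq ρ (csum (extv M v) i)
        ≤ ∏ i ∈ Finset.Icc N M, qq ρ (csum (extv M w) i) := by
      refine Finset.prod_le_prod' fun i _ => qq_mono hρ ?_
      exact Finset.sum_le_sum fun j _ => hle j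
    rw [hicc, Finset.prod_insert hnot1, Finset.prod_insert hnot1, hv1, hw1, hReq]
    calc (ν 0 : ℝ≥0∞) * (∏ i ∈ Finset.Icc 2 M, (ν (extv M w i) : ℝ≥0∞)) *
          ∏ i ∈ Finset.Icc N M, qq ρ (csum (extv M v) i)
        ≤ (ν 0 : ℝ≥0∞) * (∏ i ∈ Finset.Icc 2 M, (ν (extv M w i) : ℝ≥0∞)) *
          ∏ i ∈ Finset.Icc N M, qq ρ (csum (extv M w) i) := mul_le_mul_right hQ _
      _ = (ν 0 / ν b : ℝ≥0∞) * ((ν b : ℝ≥0∞) *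
            (∏ i ∈ Finset.Icc 2 M, (ν (extv M w i) : ℝ≥0∞)) *
            ∏ i ∈ Finset.Icc N M, qq ρ (csum (extv M w) i)) := by
          rw [← mul_assoc, ← mul_assoc, ENNReal.div_mul_cancel hνb (PMF.apply_ne_top ν b)]

lemma measure_inter_FE (h : IsUrn ρ ν P ζ B) {E : Set Ω} (hE : MeasurableSet E) (N : ℕ) :
    P (E ∩ {ω | ∀ n, N ≤ n → B n ω ≠ 0}) = ⨅ M, P (E ∩ NZ B (Finset.Icc N M)) := by
  haveI := h.prob
  have hanti : Antitone fun M => E ∩ NZ B (Finset.Icc N M) := by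
    intro M M' hMM'
    exact Set.inter_subset_inter_right E (NZ_anti (Finset.Icc_subset_Icc_right hMM'))
  have hiInt : (⋂ M, (E ∩ NZ B (Finset.Icc N M))) = E ∩ {ω | ∀ n, N ≤ n → B n ω ≠ 0} := by
    ext ω
    constructor
    · intro hω
      have h0 := Set.mem_iInter.1 hω N
      refine ⟨h0.1, fun n hn => ?_⟩
      have hn' := Set.mem_iInter.1 hω n
      have hmem : ω ∈ B n ⁻¹' ({0}ᶜ) :=
        Set.mem_iInter₂.1 hn'.2 n (Finset.mem_Icc.2 ⟨hn, le_rfl⟩)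
      simpa using hmem
    · rintro ⟨hE', hω⟩
      refine Set.mem_iInter.2 fun M => ⟨hE', Set.mem_iInter₂.2 fun i hi => ?_⟩
      have := hω i (Finset.mem_Icc.1 hi).1
      simpa using this
  rw [← hiInt]
  exact hanti.measure_iInter (fun M => (hE.inter (meas_NZ h _)).nullMeasurableSet)
    ⟨0, measure_ne_top P _⟩

end Aux

/-- **Lemma (dichotomy for drawing color `0` in the TBRW urn).** If with positive
probability color `0` is drawn only a finite number of times, then with positive
probability color `0` is never drawn. -/
theorem urn_zero_color_dichotomy
    (ρ : ℝ) (hρ : 0 < ρ) (ν : PMF ℕ) (hν0 : ν 0 < 1)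
    {Ω : Type*} [MeasurableSpace Ω] (P : Measure Ω)
    (ζ B : ℕ → Ω → ℕ) (h : IsUrn ρ ν P ζ B)
    (hpos : 0 < P {ω | {n : ℕ | 1 ≤ n ∧ B n ω = 0}.Finite}) :
    0 < P {ω | ∀ n : ℕ, 1 ≤ n → B n ω ≠ 0} := by
  haveI := h.prob
  classical
  set F : ℕ → Set Ω := fun N => {ω | ∀ n, N ≤ n → B n ω ≠ 0} with hF
  have hFmeas : ∀ N, MeasurableSet (F N) := by
    intro N
    have hFi : F N = ⋂ n, ⋂ (_ : N ≤ n), B n ⁻¹' ({0}ᶜ) := by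
      ext ω
      constructor
      · intro hω
        exact Set.mem_iInter.2 fun n => Set.mem_iInter.2 fun hn => by simpa using hω n hn
      · intro hω n hn
        have := Set.mem_iInter.1 (Set.mem_iInter.1 hω n) hn
        simpa using this
    rw [hFi]
    exact MeasurableSet.iInter fun n => MeasurableSet.iInter fun _ =>
      (h.measB n) (measurableSet_singleton 0).compl
  -- Step A : find N ≥ 1 with P (F N) > 0
  have hsub : {ω | {n : ℕ | 1 ≤ n ∧ B n ω = 0}.Finite} ⊆ ⋃ N, F N := by
    intro ω hω
    obtain ⟨m, hm⟩ := Set.Finite.bddAbove hω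
    refine Set.mem_iUnion.2 ⟨m + 1, fun n hn hBn => ?_⟩
    have hmem : n ∈ {n : ℕ | 1 ≤ n ∧ B n ω = 0} := ⟨by omega, hBn⟩
    have := hm hmem
    omega
  have hexN : ∃ N, P (F N) ≠ 0 := by
    by_contra hc
    push_neg at hc
    have hnull : P {ω | {n : ℕ | 1 ≤ n ∧ B n ω = 0}.Finite} = 0 :=
      measure_mono_null hsub (measure_iUnion_null hc)
    rw [hnull] at hpos
    exact lt_irrefl 0 hpos
  obtain ⟨N0, hN0⟩ := hexN
  set N := max N0 1 with hNdef
  have hN1 : 1 ≤ N := le_max_right _ _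
  have hFN : 0 < P (F N) := by
    refine lt_of_lt_of_le (pos_iff_ne_zero.2 hN0) (measure_mono ?_)
    intro ω hω n hn
    exact hω n (le_trans (le_max_left _ _) hn)
  set G : Set Ω := {ω | 1 ≤ ζ 1 ω} with hG
  have hGmeas : MeasurableSet G := h.measζ 1 (by trivial : MeasurableSet {k | 1 ≤ k})
  have hFNZ : ∀ M, F N ⊆ NZ B (Finset.Icc N M) := by
    intro M ω hω
    exact Set.mem_iInter₂.2 fun i hi => by simpa using hω i (Finset.mem_Icc.1 hi).1
  -- Step B : P (G ∩ F N) > 0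
  have hGFN : 0 < P (G ∩ F N) := by
    by_cases hzero : (ν 0 : ℝ≥0∞) = 0
    · have hz : P (ζ 1 ⁻¹' {0}) = 0 := by rw [prob_ζ_eq h le_rfl 0, hzero]
      have hcover : F N ⊆ (G ∩ F N) ∪ ζ 1 ⁻¹' {0} := by
        intro ω hω
        by_cases h1 : 1 ≤ ζ 1 ω
        · exact Or.inl ⟨h1, hω⟩
        · exact Or.inr (show ζ 1 ω = 0 by omega)
      have hle : P (F N) ≤ P (G ∩ F N) := by
        calc P (F N) ≤ P ((G ∩ F N) ∪ ζ 1 ⁻¹' {0}) := measure_mono hcover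
          _ ≤ P (G ∩ F N) + P (ζ 1 ⁻¹' {0}) := measure_union_le _ _
          _ = P (G ∩ F N) := by rw [hz, add_zero]
      exact lt_of_lt_of_le hFN hle
    · obtain ⟨b, hb1, hνb⟩ : ∃ b, 1 ≤ b ∧ (ν b : ℝ≥0∞) ≠ 0 := by
        by_contra hc
        push_neg at hc
        have hall : ∀ k : ℕ, k ≠ 0 → (ν k : ℝ≥0∞) = 0 := fun k hk => hc k (by omega)
        have hts : (∑' k : ℕ, (ν k : ℝ≥0∞)) = ν 0 := tsum_eq_single 0 hall
        rw [ν.tsum_coe] at hts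
        exact absurd hts.symm (ne_of_lt hν0)
      set C : ℝ≥0∞ := 1 + (ν 0 : ℝ≥0∞) / ν b with hC
      have hCne : C ≠ ∞ := by
        rw [hC]
        exact ENNReal.add_ne_top.2
          ⟨ENNReal.one_ne_top, (ENNReal.div_lt_top (PMF.apply_ne_top ν 0) hνb).ne⟩
      have hC0 : C ≠ 0 := by
        rw [hC]
        intro hcon
        have h1 : (1 : ℝ≥0∞) = 0 := (add_eq_zero.1 hcon).1
        exact one_ne_zero h1
      have hperM : ∀ M : ℕ, P (F N) ≤ C * P (G ∩ NZ B (Finset.Icc N M)) := by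
        intro M
        have hsplit : P (NZ B (Finset.Icc N (M+1)))
            ≤ P (ζ 1 ⁻¹' {0} ∩ NZ B (Finset.Icc N (M+1)))
              + P (G ∩ NZ B (Finset.Icc N (M+1))) := by
          refine le_trans (measure_mono ?_) (measure_union_le _ _)
          intro ω hω
          by_cases h1 : 1 ≤ ζ 1 ω
          · exact Or.inr ⟨h1, hω⟩
          · exact Or.inl ⟨show ζ 1 ω = 0 by omega, hω⟩
        have hstep := step2 h hρ hN1 hb1 hνb (M+1) (by omega)
        have hbG : ζ 1 ⁻¹' {b} ∩ NZ B (Finset.Icc N (M+1)) ⊆ G ∩ NZ B (Finset.Icc N (M+1)) := by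
          intro ω hω
          refine ⟨?_, hω.2⟩
          have hωb : ζ 1 ω = b := hω.1
          show 1 ≤ ζ 1 ω
          omega
        calc P (F N) ≤ P (NZ B (Finset.Icc N (M+1))) := measure_mono (hFNZ (M+1))
          _ ≤ P (ζ 1 ⁻¹' {0} ∩ NZ B (Finset.Icc N (M+1)))
              + P (G ∩ NZ B (Finset.Icc N (M+1))) := hsplit
          _ ≤ ((ν 0 : ℝ≥0∞) / ν b) * P (ζ 1 ⁻¹' {b} ∩ NZ B (Finset.Icc N (M+1)))
              + P (G ∩ NZ B (Finset.Icc N (M+1))) := add_le_add_left hstep _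
          _ ≤ ((ν 0 : ℝ≥0∞) / ν b) * P (G ∩ NZ B (Finset.Icc N (M+1)))
              + P (G ∩ NZ B (Finset.Icc N (M+1))) :=
            add_le_add_left (mul_le_mul_right (measure_mono hbG) _) _
          _ = C * P (G ∩ NZ B (Finset.Icc N (M+1))) := by rw [hC]; ring
          _ ≤ C * P (G ∩ NZ B (Finset.Icc N M)) :=
            mul_le_mul_right (measure_mono (Set.inter_subset_inter_right _
              (NZ_anti (Finset.Icc_subset_Icc_right (by omega))))) _
      have hlim : P (G ∩ F N) = ⨅ M, P (G ∩ NZ B (Finset.Icc N M)) :=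
        measure_inter_FE h hGmeas N
      have hlimit : P (F N) ≤ C * P (G ∩ F N) := by
        rw [hlim, ENNReal.mul_iInf_of_ne hC0 hCne]
        exact le_iInf fun M => hperM M
      by_contra hc
      push_neg at hc
      have h0 : P (G ∩ F N) = 0 := le_antisymm hc zero_le
      rw [h0, mul_zero] at hlimit
      exact absurd (le_antisymm hlimit zero_le) (ne_of_gt hFN)
  -- Step C : lower bound for P (F 1)
  set β : ℝ≥0∞ := (ENNReal.ofReal (1 / (ρ + 1))) ^ (N - 1) with hβ
  have hβ0 : β ≠ 0 := by
    rw [hβ]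
    apply pow_ne_zero
    rw [Ne, ENNReal.ofReal_eq_zero, not_le]
    positivity
  have hfinal : β * P (G ∩ F N) ≤ P (F 1) := by
    have hP1 : P (F 1) = ⨅ M, P (Set.univ ∩ NZ B (Finset.Icc 1 M)) := by
      have hfe := measure_inter_FE h MeasurableSet.univ 1 (ζ := ζ)
      rw [Set.univ_inter] at hfe
      exact hfe
    rw [hP1]
    refine le_iInf fun M => ?_
    calc β * P (G ∩ F N)
        ≤ β * P (G ∩ NZ B (Finset.Icc N (M+1))) :=
          mul_le_mul_right (measure_mono (Set.inter_subset_inter_right _ (hFNZ (M+1)))) _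
      _ ≤ P (NZ B (Finset.Icc 1 (M+1))) := step1 h hρ hN1 (M+1) (by omega)
      _ ≤ P (Set.univ ∩ NZ B (Finset.Icc 1 M)) := by
          rw [Set.univ_inter]
          exact measure_mono (NZ_anti (Finset.Icc_subset_Icc_right (by omega)))
  have hposβ : 0 < β * P (G ∩ F N) := ENNReal.mul_pos hβ0 (ne_of_gt hGFN)
  show 0 < P (F 1)
  exact lt_of_lt_of_le hposβ hfinal

end TBRWPaper
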